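/- Every finite central groupoid has square order: if (S,•) is a finite central groupoid then |S| = n² for some natural number n. -/

import Mathlib

theorem central_groupoid_square_order {S : Type*} [Fintype S]
    (bu : S → S → S) (h : ∀ a b c : S, bu (bu a b) (bu b c) = b) :
    ∃ n : ℕ, Fintype.card S = n ^ 2 := by
  classical
  cases isEmpty_or_nonempty S with
  | inl hS => exact ⟨0, by simp [Fintype.card_eq_zero]⟩
  | inr hS =>
    obtain ⟨a0⟩ := hS
    let E : S → S → Prop := fun a b => ∃ x, b = bu a x
    have e1 : ∀ a c : S, E a (bu a c) := fun a c => ⟨c, rfl⟩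
    have e2 : ∀ a c : S, E (bu a c) c := fun a c => ⟨bu c c, (h a c c).symm⟩
    have uniq : ∀ a b c : S, E a b → E b c → bu a c = b := by
      rintro a b c ⟨x, rfl⟩ ⟨y, rfl⟩
      have ha : bu (bu a a) (bu a x) = a := h a a x
      calc bu a (bu (bu a x) y)
          = bu (bu (bu a a) (bu a x)) (bu (bu a x) y) := by rw [ha]
        _ = bu a x := h (bu a a) (bu a x) y
    let out : S → Finset S := fun a => Finset.univ.filter (fun b => E a b)
    let inn : S → Finset S := fun c => Finset.univ.filter (fun b => E b c)
    have deg : ∀ a c : S, (out a).card = (inn c).card := by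
      intro a c
      apply Finset.card_nbij' (fun b => bu b c) (fun x => bu a x)
      · intro b _; simp only [out, inn, Finset.mem_coe, Finset.mem_filter]
        exact ⟨Finset.mem_univ _, e2 b c⟩
      · intro x _; simp only [out, inn, Finset.mem_coe, Finset.mem_filter]
        exact ⟨Finset.mem_univ _, e1 a x⟩
      · intro b hb; simp only [out, Finset.mem_coe, Finset.mem_filter] at hb
        exact uniq a b (bu b c) hb.2 (e1 b c)
      · intro x hx; simp only [inn, Finset.mem_coe, Finset.mem_filter] at hx
        exact uniq (bu a x) x c (e2 a x) hx.2
    have degout : ∀ a : S, (out a).card = (out a0).card := by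
      intro a; rw [deg a a0, ← deg a0 a0]
    have count : Fintype.card S = ∑ b ∈ out a0, (out b).card := by
      rw [← Finset.card_sigma, ← Finset.card_univ]
      apply Finset.card_nbij' (fun c => ⟨bu a0 c, c⟩) (fun p => p.2)
      · intro c _
        simp only [Finset.mem_coe, Finset.mem_sigma, out, Finset.mem_filter]
        exact ⟨⟨Finset.mem_univ _, e1 a0 c⟩, ⟨Finset.mem_univ _, e2 a0 c⟩⟩
      · intro p _; exact Finset.mem_univ _
      · intro c _; rfl
      · rintro ⟨b, c⟩ hp
        simp only [Finset.mem_coe, Finset.mem_sigma, out, Finset.mem_filter] at hp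
        have : bu a0 c = b := uniq a0 b c hp.1.2 hp.2.2
        simp [this]
    refine ⟨(out a0).card, ?_⟩
    rw [count, Finset.sum_congr rfl (fun b _ => degout b), Finset.sum_const,
      smul_eq_mul, sq]
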